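/- arXiv:0906.1207 — 4 statements merged into one kernel-verified Lean document; each statement's English description precedes it below -/
import Mathlib

section
/- Let G be a locally compact Hausdorff abelian topological group and H a discrete subgroup of G such that the quotient G/H is compact. If K is a nonempty closed subset of G that is closed under addition (a closed subsemigroup of G) and contains H, then K is a subgroup of G; in particular, −k ∈ K for every k ∈ K. -/
/-- In a compact additive topological group, for any `g`, `-g` lies in the closure of the
set of positive multiples of `g`. -/
lemma neg_mem_closure_nsmul_aux {Q : Type*} [AddCommGroup Q] [TopologicalSpace Q]
    [IsTopologicalAddGroup Q] [CompactSpace Q] (g : Q) :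
    -g ∈ closure {x : Q | ∃ n : ℕ, 1 ≤ n ∧ n • g = x} := by
  -- a cluster point of the sequence `n • g`
  obtain ⟨x, hx⟩ := exists_clusterPt_of_compactSpace
    (Filter.map (fun n : ℕ => n • g) Filter.atTop)
  have hx' : ∀ s ∈ nhds x, ∃ᶠ n in Filter.atTop, n • g ∈ s :=
    mapClusterPt_iff_frequently.mp hx
  rw [mem_closure_iff_nhds]
  intro U hU
  -- `V` is a neighborhood of `0` such that `v ∈ V → v - g ∈ U`
  set V : Set Q := (fun v => v - g) ⁻¹' U with hV
  have hVnhds : V ∈ nhds (0 : Q) := by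
    have hc : Continuous fun v : Q => v - g := continuous_id.sub continuous_const
    exact (hc.tendsto 0) (by simpa using hU)
  -- choose `W₁ W₂ ∈ 𝓝 0` with `W₁ - W₂ ⊆ V`
  have hsub : Filter.Tendsto (fun p : Q × Q => p.1 - p.2) (nhds (0, 0)) (nhds 0) := by
    have hc : Continuous fun p : Q × Q => p.1 - p.2 := continuous_sub
    simpa using hc.tendsto ((0 : Q), (0 : Q))
  have hmem : (fun p : Q × Q => p.1 - p.2) ⁻¹' V ∈ nhds ((0 : Q), (0 : Q)) := hsub hVnhds
  rw [nhds_prod_eq, Filter.mem_prod_iff] at hmem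
  obtain ⟨W₁, hW₁, W₂, hW₂, hW⟩ := hmem
  -- translate to a neighborhood of the cluster point `x`
  have hxW : ∀ (W : Set Q), W ∈ nhds (0 : Q) → {y : Q | y - x ∈ W} ∈ nhds x := by
    intro W hW
    have hc : Continuous fun y : Q => y - x := continuous_id.sub continuous_const
    exact (hc.tendsto x) (by simpa using hW)
  have hfreq : ∃ᶠ n in Filter.atTop, n • g ∈ {y : Q | y - x ∈ W₁ ∩ W₂} :=
    hx' _ (hxW _ (Filter.inter_mem hW₁ hW₂))
  obtain ⟨n, hn, -⟩ := (hfreq.and_eventually (Filter.eventually_ge_atTop 0)).exists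
  obtain ⟨m, hm2, hm⟩ := (hfreq.and_eventually (Filter.eventually_ge_atTop (n + 2))).exists
  have hnm : n ≤ m := by omega
  -- `(m - n) • g ∈ V`
  have hmn : (m - n) • g ∈ V := by
    have h2 : ((m • g - x, n • g - x) : Q × Q) ∈ (fun p : Q × Q => p.1 - p.2) ⁻¹' V :=
      hW (Set.mem_prod.mpr ⟨hm2.1, hn.2⟩)
    have h3 : (m • g - x) - (n • g - x) = (m - n) • g := by
      rw [sub_nsmul g hnm]; abel
    simpa [h3] using h2
  refine ⟨(m - n - 1) • g, ?_, ⟨m - n - 1, by omega, rfl⟩⟩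
  have key : (m - n - 1) • g = (m - n) • g - g := by
    rw [sub_nsmul g (show 1 ≤ m - n by omega)]; abel
  rw [key]
  exact hmn

/-- Let `G` be a locally compact Hausdorff abelian topological group and `H` a
discrete subgroup of `G` such that the quotient `G/H` is compact. If `K` is a nonempty closed
subset of `G` that is closed under addition and contains `H`, then `K` is a subgroup of `G`;
in particular `-k ∈ K` for every `k ∈ K`. -/
theorem closed_subsemigroup_containing_lattice_is_subgroup
    {G : Type*} [AddCommGroup G] [TopologicalSpace G] [IsTopologicalAddGroup G]
    [LocallyCompactSpace G] [T2Space G]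
    (H : AddSubgroup G) (hHdiscrete : DiscreteTopology H)
    (hHcompact : CompactSpace (G ⧸ H))
    (K : Set G) (hKne : K.Nonempty) (hKclosed : IsClosed K)
    (hKadd : ∀ x ∈ K, ∀ y ∈ K, x + y ∈ K)
    (hHK : (H : Set G) ⊆ K) :
    (∃ K' : AddSubgroup G, (K' : Set G) = K) ∧ ∀ k ∈ K, -k ∈ K := by
  have h0 : (0 : G) ∈ K := hHK H.zero_mem
  have hnsmul : ∀ k ∈ K, ∀ n : ℕ, 1 ≤ n → n • k ∈ K := by
    intro k hk n hn
    induction n with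
    | zero => omega
    | succ n ih =>
      rcases Nat.eq_or_lt_of_le hn with h | h
      · obtain rfl : n = 0 := by omega
        simpa using hk
      · have : n • k ∈ K := ih (by omega)
        rw [succ_nsmul]
        exact hKadd _ this _ hk
  have hneg : ∀ k ∈ K, -k ∈ K := by
    intro k hk
    set π : G → G ⧸ H := QuotientAddGroup.mk with hπ
    have hA := neg_mem_closure_nsmul_aux (π k)
    -- the set of positive multiples of `π k` is contained in `π '' K`
    have hsub : {x : G ⧸ H | ∃ n : ℕ, 1 ≤ n ∧ n • π k = x} ⊆ π '' K := by
      rintro x ⟨n, hn, rfl⟩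
      exact ⟨n • k, hnsmul k hk n hn, by simp [hπ]⟩
    have hA' : π (-k) ∈ closure (π '' K) := by
      have : π (-k) = -(π k) := by simp [hπ]
      rw [this]
      exact closure_mono hsub hA
    have hopen : IsOpenMap π := QuotientAddGroup.isOpenMap_coe
    have hcont : Continuous π := continuous_quot_mk
    have hpre : π ⁻¹' closure (π '' K) = closure (π ⁻¹' (π '' K)) :=
      hopen.preimage_closure_eq_closure_preimage hcont _
    have hmem : -k ∈ closure (π ⁻¹' (π '' K)) := by
      rw [← hpre]; exact hA'
    have hKsat : π ⁻¹' (π '' K) ⊆ K := by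
      rintro x ⟨y, hy, hxy⟩
      have : y - x ∈ H := by
        rwa [QuotientAddGroup.eq_iff_sub_mem] at hxy
      have hx : x = y + -(y - x) := by abel
      rw [hx]
      exact hKadd _ hy _ (hHK (H.neg_mem this))
    have := closure_mono hKsat hmem
    rwa [hKclosed.closure_eq] at this
  refine ⟨⟨{ carrier := K
             add_mem' := fun ha hb => hKadd _ ha _ hb
             zero_mem' := h0
             neg_mem' := fun ha => hneg _ ha }, rfl⟩, hneg⟩
end

section
/- Let G be a second countable locally compact Hausdorff abelian group, H a countable uniform lattice in G, and M a closed subgroup of G with H ⊆ M ⊆ G. Let F ∈ L²(Γ), where Γ is the dual group of G with Haar measure m_Γ, and let S be the closed linear span in L²(Γ) of the modulations {E_m F : m ∈ M}. If K ∈ S, then there exists a measurable function η : Γ → ℂ which is M*-periodic (η(γ + m*) = η(γ) for all γ ∈ Γ and all m* in the annihilator M*) such that K = η·F almost everywhere. -/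
open MeasureTheory Multiplicative Filter Topology

/-- Fourier-side characterization of principal `M`-invariant spaces (direct part).
`Γ` is the Pontryagin dual of `G`, `S` the closed linear span of the modulations
`{E_m F : m ∈ M}` in `L²(Γ)`.  Every `K ∈ S` is of the form `K = η · F` a.e. for some
measurable `M*`-periodic function `η`. -/
theorem principal_M_invariant_space_direct
    {G : Type*} [AddCommGroup G] [TopologicalSpace G] [IsTopologicalAddGroup G]
    [LocallyCompactSpace G] [T2Space G] [SecondCountableTopology G]
    [MeasurableSpace (PontryaginDual (Multiplicative G))]
    [BorelSpace (PontryaginDual (Multiplicative G))]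
    (mΓ : Measure (PontryaginDual (Multiplicative G))) [mΓ.IsHaarMeasure]
    (H : AddSubgroup G) (hHcount : Countable H) (hHdiscrete : DiscreteTopology H)
    (hHcompact : CompactSpace (G ⧸ H))
    (M : AddSubgroup G) (hHM : H ≤ M) (hMclosed : IsClosed (M : Set G))
    (F : Lp ℂ 2 mΓ)
    (S : Submodule ℂ (Lp ℂ 2 mΓ))
    (hS : S = (Submodule.span ℂ {K : Lp ℂ 2 mΓ | ∃ m ∈ M,
        (K : PontryaginDual (Multiplicative G) → ℂ) =ᵐ[mΓ]
          fun γ => (γ (ofAdd m) : ℂ) * (F : PontryaginDual (Multiplicative G) → ℂ) γ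
      }).topologicalClosure)
    (K : Lp ℂ 2 mΓ) (hK : K ∈ S) :
    ∃ η : PontryaginDual (Multiplicative G) → ℂ, Measurable η ∧
      (∀ γ mstar : PontryaginDual (Multiplicative G),
        (∀ m ∈ M, mstar (ofAdd m) = 1) → η (γ * mstar) = η γ) ∧
      (K : PontryaginDual (Multiplicative G) → ℂ) =ᵐ[mΓ]
        fun γ => η γ * (F : PontryaginDual (Multiplicative G) → ℂ) γ := by
  classical
  haveI hec : ContinuousEvalConst (PontryaginDual (Multiplicative G)) (Multiplicative G) Circle :=
    show ContinuousEvalConst (ContinuousMonoidHom (Multiplicative G) Circle)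
      (Multiplicative G) Circle from inferInstance
  let P : Lp ℂ 2 mΓ → Prop := fun K =>
    ∃ η : PontryaginDual (Multiplicative G) → ℂ, Measurable η ∧
      (∀ γ mstar : PontryaginDual (Multiplicative G),
        (∀ m ∈ M, mstar (ofAdd m) = 1) → η (γ * mstar) = η γ) ∧
      (K : PontryaginDual (Multiplicative G) → ℂ) =ᵐ[mΓ]
        fun γ => η γ * (F : PontryaginDual (Multiplicative G) → ℂ) γ
  let V : Submodule ℂ (Lp ℂ 2 mΓ) :=
    { carrier := {K | P K}
      zero_mem' := by
        refine ⟨0, measurable_const, fun _ _ _ => rfl, ?_⟩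
        filter_upwards [Lp.coeFn_zero ℂ 2 mΓ] with γ hγ
        simp [hγ]
      add_mem' := by
        rintro K₁ K₂ ⟨η₁, hm₁, hp₁, he₁⟩ ⟨η₂, hm₂, hp₂, he₂⟩
        refine ⟨η₁ + η₂, hm₁.add hm₂, fun γ ms hms => by
          simp only [Pi.add_apply, hp₁ γ ms hms, hp₂ γ ms hms], ?_⟩
        filter_upwards [Lp.coeFn_add K₁ K₂, he₁, he₂] with γ h1 h2 h3
        simp only [h1, Pi.add_apply, h2, h3]
        ring
      smul_mem' := by
        rintro c K' ⟨η, hm, hp, he⟩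
        refine ⟨c • η, hm.const_smul c, fun γ ms hms => by
          simp only [Pi.smul_apply, hp γ ms hms], ?_⟩
        filter_upwards [Lp.coeFn_smul c K', he] with γ h1 h2
        simp only [h1, Pi.smul_apply, h2, smul_eq_mul]
        ring }
  rw [hS] at hK
  have hmem : K ∈ V := by
    refine Submodule.topologicalClosure_minimal _ ?_ ?_ hK
    · rw [Submodule.span_le]
      rintro K' ⟨m, hm, hK'⟩
      refine ⟨fun γ => (γ (ofAdd m) : ℂ), ?_, ?_, hK'⟩
      · exact (continuous_subtype_val.comp (continuous_eval_const (ofAdd m))).measurable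
      · intro γ ms hms
        show (((γ * ms) (ofAdd m) : Circle) : ℂ) = ((γ (ofAdd m) : Circle) : ℂ)
        have : (γ * ms) (ofAdd m) = γ (ofAdd m) * ms (ofAdd m) := rfl
        rw [this, hms m hm, mul_one]
    · refine IsSeqClosed.isClosed ?_
      intro f L hf hlim
      have hmeas : TendstoInMeasure mΓ (fun n => ⇑(f n)) atTop ⇑L :=
        tendstoInMeasure_of_tendsto_Lp hlim
      obtain ⟨ns, -, hae⟩ := hmeas.exists_seq_tendsto_ae
      choose η hηm hηp hηe using hf
      let a : PontryaginDual (Multiplicative G) → ℝ :=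
        fun γ => (liminf (fun k => ((η (ns k) γ).re : EReal)) atTop).toReal
      let b : PontryaginDual (Multiplicative G) → ℝ :=
        fun γ => (liminf (fun k => ((η (ns k) γ).im : EReal)) atTop).toReal
      refine ⟨fun γ => (a γ : ℂ) + (b γ : ℂ) * Complex.I, ?_, ?_, ?_⟩
      · have ha : Measurable a :=
          (Measurable.liminf fun k =>
            measurable_coe_real_ereal.comp
              (Complex.measurable_re.comp (hηm (ns k)))).ereal_toReal
        have hb : Measurable b :=
          (Measurable.liminf fun k =>
            measurable_coe_real_ereal.comp
              (Complex.measurable_im.comp (hηm (ns k)))).ereal_toReal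
        exact (Complex.measurable_ofReal.comp ha).add
          ((Complex.measurable_ofReal.comp hb).mul measurable_const)
      · intro γ ms hms
        have ha : a (γ * ms) = a γ := by
          show (liminf (fun k => ((η (ns k) (γ * ms)).re : EReal)) atTop).toReal
            = (liminf (fun k => ((η (ns k) γ).re : EReal)) atTop).toReal
          simp only [hηp _ γ ms hms]
        have hb : b (γ * ms) = b γ := by
          show (liminf (fun k => ((η (ns k) (γ * ms)).im : EReal)) atTop).toReal
            = (liminf (fun k => ((η (ns k) γ).im : EReal)) atTop).toReal
          simp only [hηp _ γ ms hms]
        show (a (γ * ms) : ℂ) + (b (γ * ms) : ℂ) * Complex.I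
          = (a γ : ℂ) + (b γ : ℂ) * Complex.I
        rw [ha, hb]
      · have hall : ∀ᵐ γ ∂mΓ, ∀ k : ℕ,
            (f (ns k) : PontryaginDual (Multiplicative G) → ℂ) γ
              = η (ns k) γ * (F : PontryaginDual (Multiplicative G) → ℂ) γ := by
          rw [ae_all_iff]
          exact fun k => hηe (ns k)
        filter_upwards [hae, hall] with γ htend heq
        have htend' : Tendsto
            (fun k => η (ns k) γ * (F : PontryaginDual (Multiplicative G) → ℂ) γ) atTop
            (𝓝 ((L : PontryaginDual (Multiplicative G) → ℂ) γ)) := by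
          simpa only [heq] using htend
        by_cases hF : (F : PontryaginDual (Multiplicative G) → ℂ) γ = 0
        · have h0 : Tendsto (fun _ : ℕ => (0 : ℂ)) atTop
              (𝓝 ((L : PontryaginDual (Multiplicative G) → ℂ) γ)) := by
            simpa [hF] using htend'
          have hL0 : (L : PontryaginDual (Multiplicative G) → ℂ) γ = 0 :=
            (tendsto_nhds_unique tendsto_const_nhds h0).symm
          simp [hF, hL0]
        · set c : ℂ := (L : PontryaginDual (Multiplicative G) → ℂ) γ
            / (F : PontryaginDual (Multiplicative G) → ℂ) γ with hc
          have hηt : Tendsto (fun k => η (ns k) γ) atTop (𝓝 c) := by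
            have := htend'.div_const ((F : PontryaginDual (Multiplicative G) → ℂ) γ)
            simpa [mul_div_assoc, div_self hF] using this
          have hre : Tendsto (fun k => ((η (ns k) γ).re : EReal)) atTop (𝓝 (c.re : EReal)) :=
            (continuous_coe_real_ereal.tendsto _).comp
              ((Complex.continuous_re.tendsto _).comp hηt)
          have him : Tendsto (fun k => ((η (ns k) γ).im : EReal)) atTop (𝓝 (c.im : EReal)) :=
            (continuous_coe_real_ereal.tendsto _).comp
              ((Complex.continuous_im.tendsto _).comp hηt)
          have ha : a γ = c.re := by
            show (liminf (fun k => ((η (ns k) γ).re : EReal)) atTop).toReal = c.re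
            rw [hre.liminf_eq, EReal.toReal_coe]
          have hb : b γ = c.im := by
            show (liminf (fun k => ((η (ns k) γ).im : EReal)) atTop).toReal = c.im
            rw [him.liminf_eq, EReal.toReal_coe]
          show (L : PontryaginDual (Multiplicative G) → ℂ) γ
            = ((a γ : ℂ) + (b γ : ℂ) * Complex.I)
              * (F : PontryaginDual (Multiplicative G) → ℂ) γ
          rw [ha, hb]
          simp only [Complex.re_add_im]
          rw [hc, div_mul_cancel₀ _ hF]
  have hPK : P K := hmem
  exact hPK
end

section
/- Let G be a second countable locally compact Hausdorff abelian group, H a countable uniform lattice in G, and F ∈ L²(Γ), where Γ is the dual group of G with Haar measure m_Γ. If the closed linear span S of {E_h F : h ∈ H} satisfies E_x S ⊆ S for every x ∈ G, then for any measurable section Ω of Γ/H* one has m_Γ({γ ∈ Γ : F(γ) ≠ 0}) ≤ m_Γ(Ω). -/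
open MeasureTheory Multiplicative Filter Complex Real

section Aux

lemma aux_exists_nat_mul_mem (θ : ℝ) (h0 : 0 < θ) (h2 : θ < π/2) :
    ∃ n : ℕ, π/2 ≤ n * θ ∧ n * θ ≤ π + π/2 := by
  refine ⟨⌈(π/2)/θ⌉₊, ?_, ?_⟩
  · have := (div_le_iff₀ h0).1 (Nat.le_ceil ((π/2)/θ))
    linarith
  · have h1 : (⌈(π/2)/θ⌉₊ : ℝ) < (π/2)/θ + 1 :=
      Nat.ceil_lt_add_one (by positivity)
    have := mul_lt_mul_of_pos_right h1 h0
    rw [add_mul, div_mul_cancel₀ _ h0.ne'] at this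
    nlinarith [pi_pos]

lemma circle_coe_pow (z : Circle) (n : ℕ) : ((z ^ n : Circle) : ℂ) = (z : ℂ) ^ n := by
  induction n with
  | zero => simp
  | succ n ih => rw [pow_succ, pow_succ, Circle.coe_mul, ih]

lemma circle_exists_pow_re_nonpos (z : Circle) (hz : z ≠ 1) :
    ∃ n : ℕ, ((z ^ n : Circle) : ℂ).re ≤ 0 := by
  by_cases hre : (z : ℂ).re ≤ 0
  · exact ⟨1, by simpa using hre⟩
  push_neg at hre
  have habs : ‖(z : ℂ)‖ = 1 := Circle.norm_coe z
  have harg : |arg (z : ℂ)| < π/2 := abs_arg_lt_pi_div_two_iff.2 (Or.inl hre)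
  have hargne : arg (z : ℂ) ≠ 0 := by
    intro h
    rw [arg_eq_zero_iff] at h
    apply hz
    have h2 : (z:ℂ).re ^ 2 = 1 := by
      have := Complex.sq_norm (z:ℂ)
      rw [habs, Complex.normSq_apply, h.2] at this
      nlinarith
    have h3 : (z:ℂ).re = 1 := by nlinarith
    have h4 : (z:ℂ) = 1 := Complex.ext_iff.2 (by constructor <;> simp [h3, h.2])
    exact Circle.ext (by simp [h4])
  have key : ∀ w : ℂ, ‖w‖ = 1 → 0 < arg w → arg w < π/2 →
      ∃ n : ℕ, (w ^ n).re ≤ 0 := by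
    intro w hw h0 h2
    obtain ⟨n, hn1, hn2⟩ := aux_exists_nat_mul_mem (arg w) h0 h2
    refine ⟨n, ?_⟩
    have hwe : w = Complex.exp (arg w * I) := by
      conv_lhs => rw [← norm_mul_exp_arg_mul_I w]
      rw [hw, ofReal_one, one_mul]
    rw [hwe, ← Complex.exp_nat_mul]
    have : (n : ℂ) * (↑(arg w) * I) = ↑((n : ℝ) * arg w) * I := by
      push_cast; ring
    rw [this, exp_ofReal_mul_I_re]
    exact Real.cos_nonpos_of_pi_div_two_le_of_le hn1 hn2
  rcases lt_or_gt_of_ne hargne with hneg | hpos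
  · have hinv : ‖(z : ℂ)⁻¹‖ = 1 := by simp [habs]
    have hargi : arg ((z:ℂ)⁻¹) = - arg (z:ℂ) := by
      rw [Complex.arg_inv, if_neg]
      intro h
      rw [h] at harg
      rw [abs_of_pos pi_pos] at harg
      linarith [pi_pos]
    obtain ⟨n, hn⟩ := key ((z:ℂ)⁻¹) hinv (by rw [hargi]; linarith)
      (by rw [hargi]; rw [abs_lt] at harg; linarith)
    refine ⟨n, ?_⟩
    rw [circle_coe_pow]
    have heq : ((z:ℂ)) ^ n = (((z:ℂ)⁻¹ ^ n))⁻¹ := by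
      rw [← inv_pow, inv_inv]
    rw [heq]
    have h1 : ‖(z:ℂ)⁻¹ ^ n‖ = 1 := by simp [hinv, habs]
    have h2 : (((z:ℂ)⁻¹ ^ n)⁻¹).re = ((z:ℂ)⁻¹ ^ n).re := by
      rw [Complex.inv_re, Complex.normSq_eq_norm_sq, h1]
      simp
    rw [h2]; exact hn
  · obtain ⟨n, hn⟩ := key (z:ℂ) habs hpos (lt_of_abs_lt harg)
    exact ⟨n, by rw [circle_coe_pow]; exact hn⟩

lemma countable_of_one_le_dist {X : Type*} [MetricSpace X] [SecondCountableTopology X]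
    {S : Set X} (h : ∀ x ∈ S, ∀ y ∈ S, x ≠ y → 1 ≤ dist x y) : S.Countable := by
  obtain ⟨D, hDc, hDd⟩ := TopologicalSpace.exists_countable_dense X
  have hcover : S ⊆ ⋃ d ∈ D, S ∩ Metric.ball d (1/2) := by
    intro s hs
    obtain ⟨d, hd, hdist⟩ := Metric.dense_iff.1 hDd s (1/2) (by norm_num)
    exact Set.mem_biUnion hdist ⟨hs, by
      rw [Metric.mem_ball, dist_comm]
      exact Metric.mem_ball.1 hd⟩
  refine Set.Countable.mono hcover (hDc.biUnion fun d _ => ?_)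
  refine Set.Subsingleton.countable fun x hx y hy => ?_
  by_contra hne
  have := h x hx.1 y hy.1 hne
  have hx2 := Metric.mem_ball.1 hx.2
  have hy2 := Metric.mem_ball.1 hy.2
  have := dist_triangle x d y
  rw [dist_comm d y] at this
  linarith

lemma exists_compact_addCover {G : Type*} [AddCommGroup G] [TopologicalSpace G]
    [IsTopologicalAddGroup G] [LocallyCompactSpace G] (H : AddSubgroup G)
    (hHcompact : CompactSpace (G ⧸ H)) :
    ∃ K : Set G, IsCompact K ∧ ∀ g : G, ∃ k ∈ K, g - k ∈ H := by
  classical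
  have hq : IsOpenMap ((↑) : G → G ⧸ H) := QuotientAddGroup.isOpenMap_coe
  choose C hC hCx using fun x : G => exists_compact_mem_nhds x
  have hcov : (Set.univ : Set (G ⧸ H)) ⊆
      ⋃ x : G, ((↑) : G → G ⧸ H) '' interior (C x) := by
    rintro y -
    obtain ⟨x, rfl⟩ := QuotientAddGroup.mk_surjective y
    exact Set.mem_iUnion.2 ⟨x, ⟨x, mem_interior_iff_mem_nhds.2 (hCx x), rfl⟩⟩
  obtain ⟨t, ht⟩ := isCompact_univ.elim_finite_subcover
    (fun x : G => ((↑) : G → G ⧸ H) '' interior (C x))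
    (fun x => hq _ isOpen_interior) hcov
  refine ⟨⋃ x ∈ t, C x, t.isCompact_biUnion fun x _ => hC x, fun g => ?_⟩
  have : (g : G ⧸ H) ∈ ⋃ x ∈ t, ((↑) : G → G ⧸ H) '' interior (C x) :=
    ht (Set.mem_univ _)
  obtain ⟨x, hxt, k, hk, hkg⟩ := by
    simpa using this
  refine ⟨k, Set.mem_biUnion hxt (interior_subset hk), ?_⟩
  have := (QuotientAddGroup.eq (s := H) (a := k) (b := g)).1 hkg
  simpa [neg_add_eq_sub] using this

lemma hstar_countable {G : Type*} [AddCommGroup G] [TopologicalSpace G] [IsTopologicalAddGroup G]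
    [LocallyCompactSpace G] [T2Space G] [SecondCountableTopology G]
    (H : AddSubgroup G) (hHcompact : CompactSpace (G ⧸ H)) :
    {γ : PontryaginDual (Multiplicative G) | ∀ h ∈ H, γ (ofAdd h) = 1}.Countable := by
  classical
  obtain ⟨K, hKc, hKcov⟩ := exists_compact_addCover H hHcompact
  haveI : CompactSpace K := isCompact_iff_compactSpace.1 hKc
  set Hstar := {γ : PontryaginDual (Multiplicative G) | ∀ h ∈ H, γ (ofAdd h) = 1} with hHstar
  set Φ : PontryaginDual (Multiplicative G) → C(K, ℂ) :=
    fun γ => ⟨fun k => ((γ (ofAdd (k : G))) : ℂ), by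
      have h1 : Continuous γ := map_continuous γ
      exact continuous_subtype_val.comp ((h1.comp continuous_ofAdd).comp continuous_subtype_val)⟩ with hΦ
  have hsep : ∀ σ ∈ Hstar, ∀ τ ∈ Hstar, σ ≠ τ → 1 ≤ dist (Φ σ) (Φ τ) := by
    intro σ hσ τ hτ hne
    set δ := σ / τ with hδ
    have hδmem : ∀ h ∈ H, δ (ofAdd h) = 1 := by
      intro h hh
      have : δ (ofAdd h) = σ (ofAdd h) / τ (ofAdd h) := rfl
      rw [this, hσ h hh, hτ h hh, div_one]
    have hδne : δ ≠ 1 := by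
      intro h
      exact hne (by rwa [div_eq_one] at h)
    obtain ⟨a, ha⟩ : ∃ a, δ a ≠ 1 := by
      by_contra hc
      push_neg at hc
      exact hδne (DFunLike.ext _ _ hc)
    obtain ⟨n, hn⟩ := circle_exists_pow_re_nonpos (δ a) ha
    obtain ⟨k, hkK, hkH⟩ := hKcov (toAdd (a ^ n))
    have hδk : δ (ofAdd k) = (δ a) ^ n := by
      have h1 : δ (ofAdd (toAdd (a ^ n) - k)) = 1 := hδmem _ hkH
      have h2 : ofAdd (toAdd (a ^ n) - k) = a ^ n * (ofAdd k)⁻¹ := by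
        rw [ofAdd_sub, div_eq_mul_inv, ofAdd_toAdd]
      rw [h2, map_mul, map_inv] at h1
      have h3 : δ (a ^ n) = δ (ofAdd k) := by
        rwa [mul_inv_eq_one] at h1
      rw [← h3, map_pow]
    have hre : ((δ (ofAdd k)) : ℂ).re ≤ 0 := by rw [hδk]; exact hn
    have happ : dist (Φ σ ⟨k, hkK⟩) (Φ τ ⟨k, hkK⟩) ≤ dist (Φ σ) (Φ τ) :=
      ContinuousMap.dist_apply_le_dist _
    refine le_trans ?_ happ
    have hval : Φ σ ⟨k, hkK⟩ = ((σ (ofAdd k)) : ℂ) := rfl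
    have hval2 : Φ τ ⟨k, hkK⟩ = ((τ (ofAdd k)) : ℂ) := rfl
    rw [hval, hval2, Complex.dist_eq]
    have hτne : ((τ (ofAdd k)) : ℂ) ≠ 0 := Circle.coe_ne_zero _
    have hcoe : ((δ (ofAdd k)) : ℂ) = ((σ (ofAdd k)) : ℂ) / ((τ (ofAdd k)) : ℂ) := rfl
    have hfactor : ((σ (ofAdd k)) : ℂ) - ((τ (ofAdd k)) : ℂ)
        = ((τ (ofAdd k)) : ℂ) * (((δ (ofAdd k)) : ℂ) - 1) := by
      rw [hcoe]
      field_simp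
    rw [hfactor, norm_mul]
    have habs1 : ‖((τ (ofAdd k)) : ℂ)‖ = 1 := Circle.norm_coe _
    rw [habs1, one_mul]
    calc (1:ℝ) ≤ |(((δ (ofAdd k)) : ℂ) - 1).re| := by
          rw [Complex.sub_re, Complex.one_re]
          exact le_abs.2 (Or.inr (by linarith))
      _ ≤ ‖_‖ := Complex.abs_re_le_norm _
  refine Set.countable_of_injective_of_countable_image (f := Φ) ?_ ?_
  · intro σ hσ τ hτ heq
    by_contra hne
    have h2 := hsep σ hσ τ hτ hne
    rw [heq, dist_self] at h2
    linarith
  · apply countable_of_one_le_dist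
    rintro x ⟨σ, hσ, rfl⟩ y ⟨τ, hτ, rfl⟩ hxy
    exact hsep σ hσ τ hτ (fun h => hxy (by rw [h]))

end Aux

/-- `ModulateMem mΓ x F S` says that the modulation `E_x F`, `(E_x F)(γ) = (x,γ)·F(γ)`,
belongs to the set `S ⊆ L²(Γ)`, where `Γ` is the Pontryagin dual of `G`. -/
def ModulateMem {G : Type*} [AddCommGroup G] [TopologicalSpace G]
    [MeasurableSpace (PontryaginDual (Multiplicative G))]
    (mΓ : Measure (PontryaginDual (Multiplicative G))) (x : G)
    (F : Lp ℂ 2 mΓ) (S : Set (Lp ℂ 2 mΓ)) : Prop :=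
  ∃ K ∈ S, (K : PontryaginDual (Multiplicative G) → ℂ) =ᵐ[mΓ]
    fun γ => (γ (ofAdd x) : ℂ) * (F : PontryaginDual (Multiplicative G) → ℂ) γ

/-- if the closed linear span `S` of `{E_h F : h ∈ H}` in `L²(Γ)` is invariant
under `E_x` for every `x ∈ G`, then for any measurable section `Ω` of `Γ/H*` one has
`m_Γ({F ≠ 0}) ≤ m_Γ(Ω)`. -/
theorem support_of_generator_of_G_invariant_space
    {G : Type*} [AddCommGroup G] [TopologicalSpace G] [IsTopologicalAddGroup G]
    [LocallyCompactSpace G] [T2Space G] [SecondCountableTopology G]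
    [MeasurableSpace (PontryaginDual (Multiplicative G))]
    [BorelSpace (PontryaginDual (Multiplicative G))]
    (mΓ : Measure (PontryaginDual (Multiplicative G))) [mΓ.IsHaarMeasure]
    (H : AddSubgroup G) (hHcount : Countable H) (hHdiscrete : DiscreteTopology H)
    (hHcompact : CompactSpace (G ⧸ H))
    (F : Lp ℂ 2 mΓ)
    (S : Submodule ℂ (Lp ℂ 2 mΓ))
    (hS : S = (Submodule.span ℂ {K : Lp ℂ 2 mΓ | ∃ h ∈ H,
        (K : PontryaginDual (Multiplicative G) → ℂ) =ᵐ[mΓ]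
          fun γ => (γ (ofAdd h) : ℂ) * (F : PontryaginDual (Multiplicative G) → ℂ) γ
      }).topologicalClosure)
    (hGinv : ∀ x : G, ∀ K ∈ S, ModulateMem mΓ x K S)
    (Hstar : Set (PontryaginDual (Multiplicative G)))
    (hHstar : Hstar = {γ | ∀ h ∈ H, γ (ofAdd h) = 1})
    (Ω : Set (PontryaginDual (Multiplicative G)))
    (hΩmeas : MeasurableSet Ω) (hΩfin : mΓ Ω < ⊤)
    (hΩ : ∀ γ : PontryaginDual (Multiplicative G), ∃! ω, ω ∈ Ω ∧ γ / ω ∈ Hstar) :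
    mΓ {γ | (F : PontryaginDual (Multiplicative G) → ℂ) γ ≠ 0} ≤ mΓ Ω := by
  classical
  have hHstarCount : Hstar.Countable := by
    rw [hHstar]; exact hstar_countable H hHcompact
  set E := {γ | (F : PontryaginDual (Multiplicative G) → ℂ) γ ≠ 0} with hE
  have hEmeas : MeasurableSet E :=
    (Lp.stronglyMeasurable F).measurable (measurableSet_singleton 0).compl
  have hinv : ∀ (σ : PontryaginDual (Multiplicative G))
      (B : Set (PontryaginDual (Multiplicative G))),
      mΓ ((fun γ => γ * σ) ⁻¹' B) = mΓ B := by
    intro σ B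
    have : (fun γ : PontryaginDual (Multiplicative G) => γ * σ) = (fun γ => σ * γ) := by
      funext γ; exact mul_comm _ _
    rw [this, measure_preimage_mul]
  -- F belongs to S
  have hFS : F ∈ S := by
    rw [hS]
    apply Submodule.le_topologicalClosure
    apply Submodule.subset_span
    refine ⟨0, H.zero_mem, Filter.Eventually.of_forall fun γ => ?_⟩
    simp
  -- the key disjointness property
  have key : ∀ σ ∈ Hstar, σ ≠ 1 →
      mΓ {γ | (F : PontryaginDual (Multiplicative G) → ℂ) γ ≠ 0 ∧
        (F : PontryaginDual (Multiplicative G) → ℂ) (γ * σ) ≠ 0} = 0 := by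
    intro σ hσmem hσne
    obtain ⟨a, ha⟩ : ∃ a, σ a ≠ 1 := by
      by_contra hc
      push_neg at hc
      exact hσne (DFunLike.ext _ _ hc)
    obtain ⟨K', hK'S, hK'⟩ := hGinv (toAdd a) F hFS
    rw [hS] at hK'S
    have hK'cl : K' ∈ closure ((Submodule.span ℂ {K : Lp ℂ 2 mΓ | ∃ h ∈ H,
        (K : PontryaginDual (Multiplicative G) → ℂ) =ᵐ[mΓ]
          fun γ => (γ (ofAdd h) : ℂ) * (F : PontryaginDual (Multiplicative G) → ℂ) γ}
        : Submodule ℂ (Lp ℂ 2 mΓ)) : Set (Lp ℂ 2 mΓ)) := by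
      rw [← Submodule.topologicalClosure_coe]
      exact hK'S
    haveI : FrechetUrysohnSpace (Lp ℂ 2 mΓ) :=
      FirstCountableTopology.frechetUrysohnSpace
    obtain ⟨V, hVmem, hVtend⟩ := mem_closure_iff_seq_limit.1 hK'cl
    have hprop : ∀ W ∈ (Submodule.span ℂ {K : Lp ℂ 2 mΓ | ∃ h ∈ H,
        (K : PontryaginDual (Multiplicative G) → ℂ) =ᵐ[mΓ]
          fun γ => (γ (ofAdd h) : ℂ) * (F : PontryaginDual (Multiplicative G) → ℂ) γ}),
        ∃ p : PontryaginDual (Multiplicative G) → ℂ,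
          (∀ γ, p (γ * σ) = p γ) ∧
          ((W : PontryaginDual (Multiplicative G) → ℂ) =ᵐ[mΓ] fun γ => p γ *
            (F : PontryaginDual (Multiplicative G) → ℂ) γ) := by
      intro W hW
      induction hW using Submodule.span_induction with
      | mem x hx =>
        obtain ⟨h, hh, hxeq⟩ := hx
        refine ⟨fun γ => ((γ (ofAdd h) : Circle) : ℂ), fun γ => ?_, hxeq⟩
        have h1 : ((γ * σ) (ofAdd h) : Circle) = γ (ofAdd h) * σ (ofAdd h) := rfl
        have h2 : σ (ofAdd h) = 1 := by
          rw [hHstar] at hσmem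
          exact hσmem h hh
        show (((γ * σ) (ofAdd h) : Circle) : ℂ) = ((γ (ofAdd h) : Circle) : ℂ)
        rw [h1, h2, mul_one]
      | zero =>
        refine ⟨0, fun γ => rfl, ?_⟩
        filter_upwards [Lp.coeFn_zero ℂ 2 mΓ] with γ hγ
        simp [hγ]
      | add x y hx hy ihx ihy =>
        obtain ⟨p₁, hp₁, he₁⟩ := ihx
        obtain ⟨p₂, hp₂, he₂⟩ := ihy
        refine ⟨p₁ + p₂, fun γ => by simp [hp₁ γ, hp₂ γ], ?_⟩
        filter_upwards [Lp.coeFn_add x y, he₁, he₂] with γ h1 h2 h3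
        show ((x + y : Lp ℂ 2 mΓ) : PontryaginDual (Multiplicative G) → ℂ) γ = _
        rw [h1, Pi.add_apply, h2, h3, Pi.add_apply, add_mul]
      | smul c x hx ih =>
        obtain ⟨p₁, hp₁, he₁⟩ := ih
        refine ⟨c • p₁, fun γ => by simp [hp₁ γ], ?_⟩
        filter_upwards [Lp.coeFn_smul c x, he₁] with γ h1 h2
        show ((c • x : Lp ℂ 2 mΓ) : PontryaginDual (Multiplicative G) → ℂ) γ = _
        rw [h1, Pi.smul_apply, h2, Pi.smul_apply, smul_eq_mul, smul_eq_mul, mul_assoc]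
    choose p hpPer hpEq using fun n => hprop (V n) (hVmem n)
    obtain ⟨ns, hnsmono, hae⟩ :=
      (tendstoInMeasure_of_tendsto_Lp hVtend).exists_seq_tendsto_ae
    set A : Set (PontryaginDual (Multiplicative G)) :=
      {γ | Tendsto (fun i => (V (ns i) : PontryaginDual (Multiplicative G) → ℂ) γ)
          atTop (nhds ((K' : PontryaginDual (Multiplicative G) → ℂ) γ)) ∧
        (∀ n, (V n : PontryaginDual (Multiplicative G) → ℂ) γ = p n γ *
          (F : PontryaginDual (Multiplicative G) → ℂ) γ) ∧
        (K' : PontryaginDual (Multiplicative G) → ℂ) γ = ((γ (ofAdd (toAdd a)) : Circle) : ℂ) *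
          (F : PontryaginDual (Multiplicative G) → ℂ) γ} with hA
    have hAae : ∀ᵐ γ ∂mΓ, γ ∈ A := by
      filter_upwards [hae, ae_all_iff.2 fun n => hpEq n, hK'] with γ h1 h2 h3
      exact ⟨h1, h2, h3⟩
    have hAnull : mΓ Aᶜ = 0 := ae_iff.1 hAae
    have hAσnull : mΓ ((fun γ => γ * σ) ⁻¹' Aᶜ) = 0 := by
      rw [hinv]; exact hAnull
    refine measure_mono_null ?_ (measure_union_null hAnull hAσnull)
    intro γ hγ
    by_contra hmem
    simp only [Set.mem_union, Set.mem_compl_iff, Set.mem_preimage, not_or, not_not] at hmem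
    obtain ⟨hγA, hγσA⟩ := hmem
    obtain ⟨hFγ, hFγσ⟩ := hγ
    obtain ⟨ht1, hv1, hk1⟩ := hγA
    obtain ⟨ht2, hv2, hk2⟩ := hγσA
    -- limit at γ
    have hFγne : (F : PontryaginDual (Multiplicative G) → ℂ) γ ≠ 0 := hFγ
    have hFγσne : (F : PontryaginDual (Multiplicative G) → ℂ) (γ * σ) ≠ 0 := hFγσ
    have t1 : Tendsto (fun i => p (ns i) γ) atTop (nhds ((γ (ofAdd (toAdd a)) : Circle) : ℂ)) := by
      have h1 : Tendsto (fun i => p (ns i) γ * (F : PontryaginDual (Multiplicative G) → ℂ) γ)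
          atTop (nhds (((γ (ofAdd (toAdd a)) : Circle) : ℂ) *
            (F : PontryaginDual (Multiplicative G) → ℂ) γ)) := by
        rw [← hk1]
        have : (fun i => p (ns i) γ * (F : PontryaginDual (Multiplicative G) → ℂ) γ)
            = fun i => (V (ns i) : PontryaginDual (Multiplicative G) → ℂ) γ := by
          funext i; rw [hv1 (ns i)]
        rw [this]
        exact ht1
      have h2 := h1.mul_const ((F : PontryaginDual (Multiplicative G) → ℂ) γ)⁻¹
      simpa [mul_assoc, mul_inv_cancel₀ hFγne] using h2
    have t2 : Tendsto (fun i => p (ns i) γ)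
        atTop (nhds (((γ * σ) (ofAdd (toAdd a)) : Circle) : ℂ)) := by
      have h1 : Tendsto (fun i => p (ns i) (γ * σ) *
          (F : PontryaginDual (Multiplicative G) → ℂ) (γ * σ))
          atTop (nhds ((((γ * σ) (ofAdd (toAdd a)) : Circle) : ℂ) *
            (F : PontryaginDual (Multiplicative G) → ℂ) (γ * σ))) := by
        rw [← hk2]
        have : (fun i => p (ns i) (γ * σ) * (F : PontryaginDual (Multiplicative G) → ℂ) (γ * σ))
            = fun i => (V (ns i) : PontryaginDual (Multiplicative G) → ℂ) (γ * σ) := by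
          funext i; rw [hv2 (ns i)]
        rw [this]
        exact ht2
      have h2 := h1.mul_const ((F : PontryaginDual (Multiplicative G) → ℂ) (γ * σ))⁻¹
      have h3 : (fun i => p (ns i) (γ * σ)) = fun i => p (ns i) γ := by
        funext i; exact hpPer (ns i) γ
      rw [← h3]
      simpa [mul_assoc, mul_inv_cancel₀ hFγσne] using h2
    have hlim : ((γ (ofAdd (toAdd a)) : Circle) : ℂ)
        = (((γ * σ) (ofAdd (toAdd a)) : Circle) : ℂ) :=
      tendsto_nhds_unique t1 t2
    have hmul : ((γ * σ) (ofAdd (toAdd a)) : Circle)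
        = γ (ofAdd (toAdd a)) * σ (ofAdd (toAdd a)) := rfl
    rw [hmul, Circle.coe_mul] at hlim
    have hγane : ((γ (ofAdd (toAdd a)) : Circle) : ℂ) ≠ 0 := Circle.coe_ne_zero _
    have : ((σ (ofAdd (toAdd a)) : Circle) : ℂ) = 1 := by
      field_simp at hlim
      tauto
    have : σ (ofAdd (toAdd a)) = 1 := Circle.ext (by simpa using this)
    rw [ofAdd_toAdd] at this
    exact ha this
  -- Hstar contains the necessary structure
  have h1mem : (1 : PontryaginDual (Multiplicative G)) ∈ Hstar := by
    rw [hHstar]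
    intro h hh
    rfl
  have hdivmem : ∀ σ ∈ Hstar, ∀ τ ∈ Hstar, τ / σ ∈ Hstar := by
    rw [hHstar]
    intro σ hσ τ hτ h hh
    have : (τ / σ) (ofAdd h) = τ (ofAdd h) / σ (ofAdd h) := rfl
    rw [this, hσ h hh, hτ h hh, div_one]
  -- the tiles
  set T : PontryaginDual (Multiplicative G) → Set (PontryaginDual (Multiplicative G)) :=
    fun σ => (fun γ => γ / σ) ⁻¹' Ω with hT
  set B : PontryaginDual (Multiplicative G) → Set (PontryaginDual (Multiplicative G)) :=
    fun σ => (fun ω => ω * σ) ⁻¹' E ∩ Ω with hB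
  have hBmeas : ∀ σ, MeasurableSet (B σ) := by
    intro σ
    exact (((continuous_id.mul continuous_const).measurable) hEmeas).inter hΩmeas
  have hcoverE : E ⊆ ⋃ σ ∈ Hstar, E ∩ T σ := by
    intro γ hγ
    obtain ⟨ω, ⟨hωΩ, hωstar⟩, -⟩ := hΩ γ
    refine Set.mem_biUnion hωstar ⟨hγ, ?_⟩
    show γ / (γ / ω) ∈ Ω
    rwa [div_div_cancel]
  have hTB : ∀ σ, mΓ (E ∩ T σ) = mΓ (B σ) := by
    intro σ
    have hpre : (fun ω => ω * σ) ⁻¹' (E ∩ T σ) = B σ := by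
      ext ω
      simp only [Set.mem_preimage, Set.mem_inter_iff, hB, hT]
      constructor
      · rintro ⟨h1, h2⟩
        refine ⟨h1, ?_⟩
        rwa [mul_div_cancel_right] at h2
      · rintro ⟨h1, h2⟩
        refine ⟨h1, ?_⟩
        rwa [mul_div_cancel_right]
    rw [← hpre, hinv]
  have hdisj : Hstar.Pairwise (Function.onFun (AEDisjoint mΓ) B) := by
    intro σ hσ τ hτ hne
    have hsub : B σ ∩ B τ ⊆ (fun ω => ω * σ) ⁻¹'
        {γ | (F : PontryaginDual (Multiplicative G) → ℂ) γ ≠ 0 ∧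
          (F : PontryaginDual (Multiplicative G) → ℂ) (γ * (τ / σ)) ≠ 0} := by
      rintro ω ⟨⟨h1, -⟩, ⟨h2, -⟩⟩
      refine ⟨h1, ?_⟩
      have : ω * σ * (τ / σ) = ω * τ := by
        simp [div_eq_mul_inv, mul_comm, mul_left_comm, mul_assoc]
      rw [this]
      exact h2
    have hnull : mΓ {γ | (F : PontryaginDual (Multiplicative G) → ℂ) γ ≠ 0 ∧
        (F : PontryaginDual (Multiplicative G) → ℂ) (γ * (τ / σ)) ≠ 0} = 0 := by
      refine key (τ / σ) (hdivmem σ hσ τ hτ) ?_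
      intro h
      rw [div_eq_one] at h
      exact hne h.symm
    exact measure_mono_null hsub (by rw [hinv]; exact hnull)
  calc mΓ E ≤ mΓ (⋃ σ ∈ Hstar, E ∩ T σ) := measure_mono hcoverE
    _ ≤ ∑' σ : Hstar, mΓ (E ∩ T σ) := measure_biUnion_le mΓ hHstarCount _
    _ = ∑' σ : Hstar, mΓ (B σ) := by
        exact tsum_congr fun σ => hTB σ
    _ = mΓ (⋃ σ ∈ Hstar, B σ) := by
        rw [measure_biUnion₀ hHstarCount hdisj fun σ _ => (hBmeas σ).nullMeasurableSet]
    _ ≤ mΓ Ω := by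
        refine measure_mono ?_
        intro γ hγ
        simp only [Set.mem_iUnion] at hγ
        obtain ⟨σ, -, -, hγΩ⟩ := hγ
        exact hγΩ
end

section
/- Let G be a second countable locally compact Hausdorff abelian group, H a countable uniform lattice in G, M a closed subgroup with H ⊆ M ⊆ G, Ω a measurable section of Γ/H*, and N a section of H*/M*. Set D = ⋃_{σ∈N}(Ω + σ). Then: (a) D is a measurable section of Γ/M*, i.e. D contains exactly one element of each coset of M* in Γ; and (b) the fiberization map F ↦ (δ ↦ (F(δ + m*))_{m*∈M*}) defines a surjective linear isometry from L²(Γ, m_Γ) onto L²(D, ℓ²(M*)), meaning there is a surjective linear isometry U : L²(Γ) → L²(D, ℓ²(M*); m_Γ restricted to D) such that for every F ∈ L²(Γ) with measurable representative f, for almost every δ ∈ D, (UF)(δ) is the sequence (f(δ + m*))_{m*∈M*} in ℓ²(M*). -/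
open MeasureTheory Multiplicative

section Aux

open MeasureTheory Filter Topology ENNReal
open scoped NNReal

namespace FibAux

lemma enorm_sq_meas {X : Type*} [MeasurableSpace X] {f : X → ℂ} (hf : Measurable f) :
    Measurable (fun x => (‖f x‖₊ : ℝ≥0∞) ^ (2:ℝ)) :=
  (ENNReal.continuous_rpow_const.measurable).comp (hf.nnnorm.coe_nnreal_ennreal)

lemma memℓp_two_iff {ι : Type*} (a : ι → ℂ) :
    Memℓp a 2 ↔ (∑' i, (‖a i‖₊ : ℝ≥0∞) ^ (2:ℝ)) < ⊤ := by
  rw [memℓp_gen_iff (by norm_num : (0:ℝ) < (2:ℝ≥0∞).toReal)]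
  have h2 : (2:ℝ≥0∞).toReal = (2:ℝ) := by norm_num
  rw [h2]
  have hcoe : ∀ i, (‖a i‖₊ : ℝ≥0∞) ^ (2:ℝ) = ((‖a i‖₊ ^ (2:ℝ) : ℝ≥0) : ℝ≥0∞) := by
    intro i
    rw [ENNReal.coe_rpow_of_nonneg _ (by norm_num : (0:ℝ) ≤ 2)]
  have hsc : (Summable fun i => ‖a i‖ ^ (2:ℝ)) ↔ Summable fun i => (‖a i‖₊ ^ (2:ℝ) : ℝ≥0) := by
    have he : (fun i => ‖a i‖ ^ (2:ℝ)) = fun i => ((‖a i‖₊ ^ (2:ℝ) : ℝ≥0) : ℝ) := by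
      funext i
      rw [NNReal.coe_rpow, coe_nnnorm]
    rw [he, NNReal.summable_coe]
  rw [hsc, lt_top_iff_ne_top]
  simp only [hcoe]
  exact (ENNReal.tsum_coe_ne_top_iff_summable).symm

lemma lp_norm_sq {ι : Type*} (x : lp (fun _ : ι => ℂ) 2) :
    (‖x‖₊ : ℝ≥0∞) ^ (2:ℝ) = ∑' i, (‖x i‖₊ : ℝ≥0∞) ^ (2:ℝ) := by
  have hp : (0:ℝ) < (2:ℝ≥0∞).toReal := by norm_num
  have hn := lp.norm_eq_tsum_rpow hp x
  have h2 : (2:ℝ≥0∞).toReal = (2:ℝ) := by norm_num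
  rw [h2] at hn
  have hsummable : Summable fun i => ‖x i‖ ^ (2:ℝ) := by
    have := lp.memℓp x
    rwa [memℓp_gen_iff hp, h2] at this
  have hS : (0:ℝ) ≤ ∑' i, ‖x i‖ ^ (2:ℝ) :=
    tsum_nonneg fun i => Real.rpow_nonneg (norm_nonneg _) _
  rw [← enorm_eq_nnnorm, ← ofReal_norm_eq_enorm, hn,
    ENNReal.ofReal_rpow_of_nonneg (Real.rpow_nonneg hS _) (by norm_num : (0:ℝ) ≤ 2),
    ← Real.rpow_mul hS, one_div, inv_mul_cancel₀ (by norm_num : (2:ℝ) ≠ 0), Real.rpow_one,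
    ENNReal.ofReal_tsum_of_nonneg (fun i => Real.rpow_nonneg (norm_nonneg _) _) hsummable]
  congr 1
  funext i
  rw [← enorm_eq_nnnorm, ← ofReal_norm_eq_enorm,
    ENNReal.ofReal_rpow_of_nonneg (norm_nonneg _) (by norm_num : (0:ℝ) ≤ 2)]

lemma eLpNorm_sq {X : Type*} [MeasurableSpace X] {E : Type*} [NormedAddCommGroup E]
    (ν : Measure X) (f : X → E) :
    eLpNorm f 2 ν ^ (2:ℝ) = ∫⁻ x, (‖f x‖₊ : ℝ≥0∞) ^ (2:ℝ) ∂ν := by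
  rw [eLpNorm_eq_lintegral_rpow_enorm_toReal (by norm_num) (by norm_num)]
  simp only [enorm_eq_nnnorm]
  have h2 : (2:ℝ≥0∞).toReal = (2:ℝ) := by norm_num
  rw [h2, ← ENNReal.rpow_mul, one_div, inv_mul_cancel₀ (by norm_num : (2:ℝ) ≠ 0),
    ENNReal.rpow_one]

variable {X : Type*} [MeasurableSpace X] [CommGroup X]
  {μ : Measure X} {ι : Type*} [Countable ι] {c : ι → X} {D : Set X}

section

variable (hD : MeasurableSet D)
  (hmeas : ∀ a : X, Measurable (fun x => x * a))
  (hmp : ∀ a : X, MeasurePreserving (fun x => x * a) μ μ)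
  (h1 : ∀ x : X, ∃! i : ι, x * (c i)⁻¹ ∈ D)

include hD hmeas hmp h1 in
lemma key (h : X → ℝ≥0∞) (hh : Measurable h) :
    ∫⁻ δ in D, ∑' i, h (δ * c i) ∂μ = ∫⁻ x, h x ∂μ := by
  set A : ι → Set X := fun i => (fun x => x * (c i)⁻¹) ⁻¹' D with hA
  have hAm : ∀ i, MeasurableSet (A i) := fun i => (hmeas _) hD
  have hdisj : Pairwise (Function.onFun Disjoint A) := by
    intro i j hij
    refine Set.disjoint_left.mpr fun x hxi hxj => hij ?_
    exact ((h1 x).unique hxi hxj)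
  have hcover : ⋃ i, A i = Set.univ := by
    refine Set.eq_univ_of_forall fun x => ?_
    obtain ⟨i, hi, -⟩ := h1 x
    exact Set.mem_iUnion.2 ⟨i, hi⟩
  have step1 : ∀ i, ∫⁻ δ in D, h (δ * c i) ∂μ = ∫⁻ x in A i, h x ∂μ := by
    intro i
    have hp : MeasurePreserving (fun x => x * (c i)⁻¹) (μ.restrict (A i)) (μ.restrict D) :=
      (hmp _).restrict_preimage hD
    have := hp.lintegral_comp (f := fun δ => h (δ * c i)) (hh.comp (hmeas (c i)))
    simpa [inv_mul_cancel_right] using this.symm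
  calc ∫⁻ δ in D, ∑' i, h (δ * c i) ∂μ = ∑' i, ∫⁻ δ in D, h (δ * c i) ∂μ :=
        lintegral_tsum (fun i => ((hh.comp (hmeas (c i))).aemeasurable))
    _ = ∑' i, ∫⁻ x in A i, h x ∂μ := by exact tsum_congr step1
    _ = ∫⁻ x in ⋃ i, A i, h x ∂μ := (lintegral_iUnion hAm hdisj h).symm
    _ = ∫⁻ x, h x ∂μ := by rw [hcover, Measure.restrict_univ]

include hmp in
lemma transfer {P : X → Prop} (hP : ∀ᵐ x ∂μ, P x) :
    ∀ᵐ δ ∂(μ.restrict D), ∀ i, P (δ * c i) := by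
  refine ae_restrict_of_ae ?_
  rw [ae_all_iff]
  intro i
  exact ((hmp (c i)).quasiMeasurePreserving).ae hP

end

noncomputable section

open Classical in
/-- The fiberization map on functions. -/
def gg {X : Type*} [CommGroup X] {ι : Type*} (c : ι → X) (f : X → ℂ) (δ : X) :
    lp (fun _ : ι => ℂ) 2 :=
  if h : Memℓp (fun i => f (δ * c i)) 2 then ⟨fun i => f (δ * c i), h⟩ else 0

variable {X : Type*} [MeasurableSpace X] [CommGroup X] {ι : Type*} {c : ι → X}

lemma gg_eq {f : X → ℂ} {δ : X} (h : Memℓp (fun i => f (δ * c i)) 2) :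
    gg c f δ = (⟨fun i => f (δ * c i), h⟩ : lp (fun _ : ι => ℂ) 2) := dif_pos h

lemma gg_coord {f : X → ℂ} {δ : X} (h : Memℓp (fun i => f (δ * c i)) 2) (i : ι) :
    gg c f δ i = f (δ * c i) := by rw [gg_eq h]

lemma single_eq_smul [DecidableEq ι] (i : ι) (a : ℂ) :
    lp.single (E := fun _ : ι => ℂ) 2 i a = a • lp.single (E := fun _ : ι => ℂ) 2 i (1:ℂ) := by
  rw [← lp.single_smul]; simp

lemma single_continuous [DecidableEq ι] (i : ι) :
    Continuous fun a : ℂ => lp.single (E := fun _ : ι => ℂ) 2 i a := by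
  have hfe : (fun a : ℂ => lp.single (E := fun _ : ι => ℂ) 2 i a)
      = fun a : ℂ => a • lp.single (E := fun _ : ι => ℂ) 2 i (1:ℂ) :=
    funext (single_eq_smul i)
  rw [hfe]
  exact continuous_id.smul continuous_const

lemma eval_continuous (i : ι) :
    Continuous fun x : lp (fun _ : ι => ℂ) 2 => x i := by
  refine (LipschitzWith.of_dist_le' (K := 1) fun x y => ?_).continuous
  have hxy : x i - y i = (x - y) i := by rw [lp.coeFn_sub]; rfl
  rw [one_mul, dist_eq_norm, dist_eq_norm, hxy]
  exact lp.norm_apply_le_norm (by norm_num) (x - y) i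

theorem fiber_core {μ : Measure X} [Countable ι] {D : Set X}
    (hD : MeasurableSet D)
    (hmeas : ∀ a : X, Measurable (fun x => x * a))
    (hmp : ∀ a : X, MeasurePreserving (fun x => x * a) μ μ)
    (h1 : ∀ x : X, ∃! i : ι, x * (c i)⁻¹ ∈ D) :
    ∃ U : Lp ℂ 2 μ →ₗᵢ[ℂ] Lp (lp (fun _ : ι => ℂ) 2) 2 (μ.restrict D),
      Function.Surjective ⇑U ∧
      ∀ (F : Lp ℂ 2 μ) (f : X → ℂ), Measurable f → ((F : X → ℂ) =ᵐ[μ] f) →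
        ∀ᵐ δ ∂(μ.restrict D), ∀ i : ι,
          ((U F : Lp (lp (fun _ : ι => ℂ) 2) 2 (μ.restrict D)) : X → lp (fun _ : ι => ℂ) 2) δ i
            = f (δ * c i) := by
  classical
  -- sqrt helper
  have sqrt_sq : ∀ a : ℝ≥0∞, (a ^ (2:ℝ)) ^ (1/2:ℝ) = a := by
    intro a; rw [← ENNReal.rpow_mul]; norm_num
  have sq_lt_top : ∀ a : ℝ≥0∞, a ^ (2:ℝ) ≠ ⊤ → a < ⊤ := by
    intro a ha
    have := ENNReal.rpow_lt_top_of_nonneg (by norm_num : (0:ℝ) ≤ 1/2) ha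
    rwa [sqrt_sq a] at this
  -- a.e. membership in ℓ²
  have hml : ∀ (f : X → ℂ), Measurable f → MemLp f 2 μ →
      ∀ᵐ δ ∂(μ.restrict D), Memℓp (fun i => f (δ * c i)) 2 := by
    intro f hf hf2
    have hen := enorm_sq_meas hf
    have hfin : ∫⁻ δ in D, ∑' i, (‖f (δ * c i)‖₊ : ℝ≥0∞) ^ (2:ℝ) ∂μ ≠ ⊤ := by
      rw [key hD hmeas hmp h1 _ hen, ← eLpNorm_sq]
      exact (ENNReal.rpow_lt_top_of_nonneg (by norm_num) hf2.eLpNorm_ne_top).ne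
    have hmeassum : Measurable fun δ => ∑' i, (‖f (δ * c i)‖₊ : ℝ≥0∞) ^ (2:ℝ) :=
      Measurable.ennreal_tsum fun i => hen.comp (hmeas (c i))
    exact (ae_lt_top hmeassum hfin).mono fun δ hδ => (memℓp_two_iff _).2 hδ
  -- a.e. strong measurability of gg f
  have hsm : ∀ (f : X → ℂ), Measurable f → MemLp f 2 μ →
      AEStronglyMeasurable (gg c f) (μ.restrict D) := by
    intro f hf hf2
    refine aestronglyMeasurable_of_tendsto_ae (atTop : Filter (Finset ι))
      (f := fun s δ => ∑ i ∈ s, lp.single 2 i (f (δ * c i))) (fun s => ?_) ?_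
    · refine StronglyMeasurable.aestronglyMeasurable ?_
      refine Finset.stronglyMeasurable_fun_sum _ fun i _ => ?_
      exact (single_continuous i).comp_stronglyMeasurable
        ((hf.comp (hmeas (c i))).stronglyMeasurable)
    · refine (hml f hf hf2).mono fun δ h => ?_
      have h2 := lp.hasSum_single (by norm_num : (2:ℝ≥0∞) ≠ ⊤)
        (⟨fun i => f (δ * c i), h⟩ : lp (fun _ : ι => ℂ) 2)
      have h3 : HasSum (fun i => lp.single 2 i (f (δ * c i))) (gg c f δ) := by
        rw [gg_eq h]; exact h2
      exact h3
  -- eLpNorm identity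
  have hg2 : ∀ (f : X → ℂ), Measurable f → MemLp f 2 μ →
      eLpNorm (gg c f) 2 (μ.restrict D) = eLpNorm f 2 μ := by
    intro f hf hf2
    have heq : ∀ᵐ δ ∂(μ.restrict D),
        (‖gg c f δ‖₊ : ℝ≥0∞) ^ (2:ℝ) = ∑' i, (‖f (δ * c i)‖₊ : ℝ≥0∞) ^ (2:ℝ) := by
      refine (hml f hf hf2).mono fun δ h => ?_
      rw [gg_eq h, lp_norm_sq]
    have hI : ∫⁻ δ in D, (‖gg c f δ‖₊ : ℝ≥0∞) ^ (2:ℝ) ∂μ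
        = ∫⁻ x, (‖f x‖₊ : ℝ≥0∞) ^ (2:ℝ) ∂μ := by
      rw [lintegral_congr_ae heq, key hD hmeas hmp h1 _ (enorm_sq_meas hf)]
    have h2' : eLpNorm (gg c f) 2 (μ.restrict D) ^ (2:ℝ) = eLpNorm f 2 μ ^ (2:ℝ) := by
      rw [eLpNorm_sq (μ.restrict D) (gg c f), eLpNorm_sq μ f]; exact hI
    calc eLpNorm (gg c f) 2 (μ.restrict D)
        = (eLpNorm (gg c f) 2 (μ.restrict D) ^ (2:ℝ)) ^ (1/2:ℝ) := (sqrt_sq _).symm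
      _ = (eLpNorm f 2 μ ^ (2:ℝ)) ^ (1/2:ℝ) := by rw [h2']
      _ = eLpNorm f 2 μ := sqrt_sq _
  have hmem : ∀ (f : X → ℂ), Measurable f → MemLp f 2 μ → MemLp (gg c f) 2 (μ.restrict D) := by
    intro f hf hf2
    exact ⟨hsm f hf hf2, by rw [hg2 f hf hf2]; exact hf2.eLpNorm_lt_top⟩
  -- the underlying map
  have hFmeas : ∀ F : Lp ℂ 2 μ, Measurable (F : X → ℂ) :=
    fun F => (Lp.stronglyMeasurable F).measurable
  set U0 : Lp ℂ 2 μ → Lp (lp (fun _ : ι => ℂ) 2) 2 (μ.restrict D) :=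
    fun F => (hmem _ (hFmeas F) (Lp.memLp F)).toLp (gg c (F : X → ℂ)) with hU0
  -- congruence
  have hcongr : ∀ (f f' : X → ℂ), f =ᵐ[μ] f' → gg c f =ᵐ[μ.restrict D] gg c f' := by
    intro f f' hff
    refine ((transfer (c := c) (D := D) hmp hff).mono fun δ h => ?_)
    have : (fun i => f (δ * c i)) = fun i => f' (δ * c i) := funext h
    simp only [gg, this]
  have hcoeU0 : ∀ F, (U0 F : X → lp (fun _ : ι => ℂ) 2) =ᵐ[μ.restrict D] gg c (F : X → ℂ) :=
    fun F => MemLp.coeFn_toLp _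
  -- additivity
  have hadd : ∀ F F' : Lp ℂ 2 μ, U0 (F + F') = U0 F + U0 F' := by
    intro F F'
    have h1' : ((F + F' : Lp ℂ 2 μ) : X → ℂ) =ᵐ[μ] (F : X → ℂ) + (F' : X → ℂ) :=
      Lp.coeFn_add F F'
    have hae : gg c ((F + F' : Lp ℂ 2 μ) : X → ℂ)
        =ᵐ[μ.restrict D] gg c ((F : X → ℂ) + (F' : X → ℂ)) := hcongr _ _ h1'
    have hae2 : gg c ((F : X → ℂ) + (F' : X → ℂ))
        =ᵐ[μ.restrict D] gg c (F : X → ℂ) + gg c (F' : X → ℂ) := by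
      have hm1 := hml _ (hFmeas F) (Lp.memLp F)
      have hm2 := hml _ (hFmeas F') (Lp.memLp F')
      filter_upwards [hm1, hm2] with δ hδ1 hδ2
      have hsum : Memℓp (fun i => ((F : X → ℂ) + (F' : X → ℂ)) (δ * c i)) 2 := hδ1.add hδ2
      rw [Pi.add_apply, gg_eq hδ1, gg_eq hδ2, gg_eq hsum]
      exact lp.ext rfl
    have hmm : MemLp (gg c (F : X → ℂ) + gg c (F' : X → ℂ)) 2 (μ.restrict D) :=
      (hmem _ (hFmeas F) (Lp.memLp F)).add (hmem _ (hFmeas F') (Lp.memLp F'))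
    rw [hU0]
    simp only
    rw [MemLp.toLp_congr _ hmm (hae.trans hae2)]
    exact MemLp.toLp_add _ _
  -- smul
  have hsmul : ∀ (a : ℂ) (F : Lp ℂ 2 μ), U0 (a • F) = a • U0 F := by
    intro a F
    have h1' : ((a • F : Lp ℂ 2 μ) : X → ℂ) =ᵐ[μ] a • (F : X → ℂ) := Lp.coeFn_smul a F
    have hae : gg c ((a • F : Lp ℂ 2 μ) : X → ℂ)
        =ᵐ[μ.restrict D] gg c (a • (F : X → ℂ)) := hcongr _ _ h1'
    have hae2 : gg c (a • (F : X → ℂ))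
        =ᵐ[μ.restrict D] a • gg c (F : X → ℂ) := by
      have hm1 := hml _ (hFmeas F) (Lp.memLp F)
      filter_upwards [hm1] with δ hδ1
      have hsmul' : Memℓp (fun i => (a • (F : X → ℂ)) (δ * c i)) 2 := hδ1.const_smul a
      rw [Pi.smul_apply, gg_eq hδ1, gg_eq hsmul']
      refine lp.ext ?_
      rw [lp.coeFn_smul]
      rfl
    have hmm : MemLp (a • gg c (F : X → ℂ)) 2 (μ.restrict D) :=
      (hmem _ (hFmeas F) (Lp.memLp F)).const_smul a
    rw [hU0]
    simp only
    rw [MemLp.toLp_congr _ hmm (hae.trans hae2)]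
    exact MemLp.toLp_const_smul a _
  -- norm
  have hnorm : ∀ F : Lp ℂ 2 μ, ‖U0 F‖ = ‖F‖ := by
    intro F
    rw [hU0]
    simp only
    rw [Lp.norm_toLp, hg2 _ (hFmeas F) (Lp.memLp F), Lp.norm_def]
  set U : Lp ℂ 2 μ →ₗᵢ[ℂ] Lp (lp (fun _ : ι => ℂ) 2) 2 (μ.restrict D) :=
    { toFun := U0
      map_add' := hadd
      map_smul' := hsmul
      norm_map' := hnorm } with hU
  refine ⟨U, ?_, ?_⟩
  · -- surjectivity
    intro Φ
    set φ : X → lp (fun _ : ι => ℂ) 2 := (Φ : X → lp (fun _ : ι => ℂ) 2) with hφ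
    have hφsm : StronglyMeasurable φ := Lp.stronglyMeasurable Φ
    set A : ι → Set X := fun i => (fun x => x * (c i)⁻¹) ⁻¹' D with hA
    have hAm : ∀ i, MeasurableSet (A i) := fun i => (hmeas _) hD
    set sfn : ι → X → ℂ :=
      fun i => (A i).indicator (fun x => φ (x * (c i)⁻¹) i) with hsfn
    have hsfn_sm : ∀ i, StronglyMeasurable (sfn i) := by
      intro i
      refine StronglyMeasurable.indicator ?_ (hAm i)
      exact (eval_continuous i).comp_stronglyMeasurable
        (hφsm.comp_measurable (hmeas ((c i)⁻¹)))
    set f : X → ℂ := fun x => ∑' i, sfn i x with hf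
    have hone : ∀ x : X, ∀ j : ι, x ∉ A j → sfn j x = 0 := by
      intro x j hx
      exact Set.indicator_of_notMem hx _
    have hfs : ∀ x, HasSum (fun i => sfn i x) (f x) := by
      intro x
      obtain ⟨i₀, hi₀, hu⟩ := h1 x
      have : Summable fun i => sfn i x := by
        refine summable_of_ne_finset_zero (s := {i₀}) fun j hj => ?_
        refine hone x j fun hxj => ?_
        exact hj (Finset.mem_singleton.2 (hu j hxj))
      exact this.hasSum
    have hfsm : StronglyMeasurable f := by
      refine stronglyMeasurable_of_tendsto (atTop : Filter (Finset ι))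
        (f := fun s x => ∑ i ∈ s, sfn i x)
        (fun s => Finset.stronglyMeasurable_fun_sum _ fun i _ => hsfn_sm i) ?_
      rw [tendsto_pi_nhds]
      exact fun x => hfs x
    have hval : ∀ δ ∈ D, ∀ i : ι, f (δ * c i) = φ δ i := by
      intro δ hδ i
      have hmem' : (δ * c i) * (c i)⁻¹ ∈ D := by
        rw [mul_inv_cancel_right]; exact hδ
      have huniq := h1 (δ * c i)
      have hf_eq : f (δ * c i) = sfn i (δ * c i) := by
        refine tsum_eq_single i fun j hj => ?_
        refine hone _ j fun hxj => ?_
        exact hj (huniq.unique hxj hmem')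
      have hAi : δ * c i ∈ A i := hmem'
      rw [hf_eq, hsfn]
      simp only [Set.indicator_of_mem hAi, mul_inv_cancel_right]
    have hIf : ∫⁻ x, (‖f x‖₊ : ℝ≥0∞) ^ (2:ℝ) ∂μ
        = eLpNorm φ 2 (μ.restrict D) ^ (2:ℝ) := by
      rw [← key hD hmeas hmp h1 _ (enorm_sq_meas hfsm.measurable), eLpNorm_sq]
      refine setLIntegral_congr_fun hD (fun δ hδ => ?_)
      have : ∀ i : ι, (‖f (δ * c i)‖₊ : ℝ≥0∞) ^ (2:ℝ) = (‖φ δ i‖₊ : ℝ≥0∞) ^ (2:ℝ) := by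
        intro i; rw [hval δ hδ i]
      rw [tsum_congr this, ← lp_norm_sq (φ δ)]
    have hfmem : MemLp f 2 μ := by
      refine ⟨hfsm.aestronglyMeasurable, ?_⟩
      refine sq_lt_top _ ?_
      rw [eLpNorm_sq, hIf]
      exact (ENNReal.rpow_lt_top_of_nonneg (by norm_num) (Lp.memLp Φ).eLpNorm_ne_top).ne
    refine ⟨hfmem.toLp f, ?_⟩
    have hcoe : ((hfmem.toLp f : Lp ℂ 2 μ) : X → ℂ) =ᵐ[μ] f := MemLp.coeFn_toLp _
    have hgg : gg c ((hfmem.toLp f : Lp ℂ 2 μ) : X → ℂ) =ᵐ[μ.restrict D] φ := by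
      have h2' := transfer (μ := μ) (c := c) (D := D) hmp hcoe
      filter_upwards [h2', ae_restrict_mem hD] with δ hδ hδD
      have hfam : (fun i => ((hfmem.toLp f : Lp ℂ 2 μ) : X → ℂ) (δ * c i)) = ⇑(φ δ) := by
        funext i
        rw [hδ i, hval δ hδD i]
      have hmemfam : Memℓp (fun i => ((hfmem.toLp f : Lp ℂ 2 μ) : X → ℂ) (δ * c i)) 2 := by
        rw [hfam]; exact lp.memℓp (φ δ)
      rw [gg_eq hmemfam]
      exact lp.ext hfam
    show U0 (hfmem.toLp f) = Φ
    rw [hU0]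
    simp only
    rw [MemLp.toLp_congr _ (Lp.memLp Φ) hgg]
    exact Lp.toLp_coeFn Φ _
  · -- the a.e. formula
    intro F f hf hFf
    have h2' := transfer (μ := μ) (c := c) (D := D) hmp hFf
    have hm1 := hml _ (hFmeas F) (Lp.memLp F)
    filter_upwards [hcoeU0 F, h2', hm1] with δ hδ1 hδ2 hδ3
    intro i
    have : (U F : X → lp (fun _ : ι => ℂ) 2) δ = gg c (F : X → ℂ) δ := hδ1
    rw [this, gg_coord hδ3 i, hδ2 i]

end

end FibAux

namespace FibAux2

lemma circle_eq_one_of_pow_re_pos (z : Circle)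
    (h : ∀ n : ℕ, 0 < ((z ^ n : Circle) : ℂ).re) : z = 1 := by
  by_contra hne
  set θ := Complex.arg (z:ℂ) with hθ
  have habs : ‖(z:ℂ)‖ = 1 := Circle.norm_coe z
  have hz : (z:ℂ) = Complex.exp (θ * Complex.I) := by
    have h0 := Complex.norm_mul_exp_arg_mul_I (z:ℂ)
    rw [habs] at h0
    rw [← h0]
    simp [hθ]
  have hre : ∀ n : ℕ, 0 < Real.cos (n * θ) := by
    intro n
    have hn := h n
    rw [Circle.coe_pow, hz, ← Complex.exp_nat_mul] at hn
    have harg : (n : ℂ) * (θ * Complex.I) = ((n * θ : ℝ) : ℂ) * Complex.I := by push_cast; ring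
    rwa [harg, Complex.exp_ofReal_mul_I_re] at hn
  have hθne : θ ≠ 0 := by
    intro h0
    apply hne
    have hz1 : (z:ℂ) = 1 := by rw [hz, h0]; simp
    exact Subtype.ext hz1
  set t := |θ| with ht
  have htpos : 0 < t := abs_pos.2 hθne
  have htlepi : t ≤ Real.pi := abs_le.2 ⟨(Complex.neg_pi_lt_arg _).le, Complex.arg_le_pi _⟩
  have hcost : ∀ n : ℕ, 0 < Real.cos (n * t) := by
    intro n
    have h1 : (n:ℝ) * t = |(n:ℝ) * θ| := by
      rw [abs_mul, abs_of_nonneg (by positivity : (0:ℝ) ≤ (n:ℝ))]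
    rw [h1, Real.cos_abs]
    exact hre n
  have htlt : t < Real.pi / 2 := by
    by_contra hge
    push_neg at hge
    have hc1 := hcost 1
    rw [Nat.cast_one, one_mul] at hc1
    have := Real.cos_nonpos_of_pi_div_two_le_of_le hge
      (htlepi.trans (by linarith [Real.pi_pos]))
    linarith
  set k := ⌈(Real.pi/2) / t⌉₊ with hk
  have hk1 : (Real.pi/2)/t ≤ (k:ℝ) := Nat.le_ceil _
  have hklow : Real.pi/2 ≤ (k:ℝ) * t := by
    rw [div_le_iff₀ htpos] at hk1
    linarith
  have hkup : (k:ℝ) * t < Real.pi := by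
    have h2 : (k:ℝ) < (Real.pi/2)/t + 1 := Nat.ceil_lt_add_one (by positivity)
    have h3 : (k:ℝ) * t < ((Real.pi/2)/t + 1) * t := by
      exact mul_lt_mul_of_pos_right h2 htpos
    rw [add_mul, div_mul_cancel₀ _ htpos.ne', one_mul] at h3
    linarith
  have := Real.cos_nonpos_of_pi_div_two_le_of_le hklow
    (by linarith [Real.pi_pos] : (k:ℝ) * t ≤ Real.pi + Real.pi / 2)
  linarith [hcost k]

lemma countable_annihilator {G : Type*} [AddCommGroup G] [TopologicalSpace G]
    [IsTopologicalAddGroup G] [LocallyCompactSpace G] [SecondCountableTopology G]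
    (H : AddSubgroup G) (hHcompact : CompactSpace (G ⧸ H))
    (Hstar : Set (PontryaginDual (Multiplicative G)))
    (hHstar : Hstar = {γ | ∀ h ∈ H, γ (ofAdd h) = 1}) :
    Hstar.Countable := by
  haveI : SecondCountableTopology (Multiplicative G) := ‹SecondCountableTopology G›
  haveI : LocallyCompactSpace (Multiplicative G) := ‹LocallyCompactSpace G›
  haveI : SecondCountableTopology (PontryaginDual (Multiplicative G)) :=
    (ContinuousMonoidHom.isEmbedding_toContinuousMap _ _).secondCountableTopology
  -- a compact set covering G modulo H
  obtain ⟨K, hKcomp, hKcov⟩ : ∃ K : Set G, IsCompact K ∧ ∀ x : G, ∃ y ∈ K, x - y ∈ H := by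
    choose Kx hKxc hKxn using fun x : G => exists_compact_mem_nhds x
    have hcov : (Set.univ : Set (G ⧸ H)) ⊆
        ⋃ x : G, (QuotientAddGroup.mk '' interior (Kx x) : Set (G ⧸ H)) := by
      intro q _
      induction q using QuotientAddGroup.induction_on with
      | H x =>
        exact Set.mem_iUnion.2
          ⟨x, Set.mem_image_of_mem _ (mem_interior_iff_mem_nhds.2 (hKxn x))⟩
    obtain ⟨t, ht⟩ := isCompact_univ.elim_finite_subcover
      (fun x : G => (QuotientAddGroup.mk '' interior (Kx x) : Set (G ⧸ H)))
      (fun x => QuotientAddGroup.isOpenMap_coe _ isOpen_interior) hcov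
    refine ⟨⋃ x ∈ t, Kx x, t.isCompact_biUnion (fun x _ => hKxc x), ?_⟩
    intro x
    have hx := ht (Set.mem_univ ((x : G ⧸ H)))
    rw [Set.mem_iUnion₂] at hx
    obtain ⟨y0, hy0t, z, hz, hzq⟩ := hx
    refine ⟨z, Set.mem_biUnion hy0t (interior_subset hz), ?_⟩
    exact (QuotientAddGroup.eq_iff_sub_mem).1 hzq.symm
  -- the open set V isolating 1 in Hstar
  set W0 : Set Circle := {z : Circle | 0 < (z:ℂ).re} with hW0def
  have hW0 : IsOpen W0 := by
    have : W0 = (fun z : Circle => (z:ℂ).re) ⁻¹' (Set.Ioi 0) := rfl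
    rw [this]
    exact isOpen_Ioi.preimage (Complex.continuous_re.comp continuous_subtype_val)
  set KM : Set (Multiplicative G) := (fun x : G => ofAdd x) '' K with hKM
  have hKMc : IsCompact KM := hKcomp.image continuous_ofAdd
  set V : Set (PontryaginDual (Multiplicative G)) :=
    ContinuousMonoidHom.toContinuousMap ⁻¹'
      {f : C(Multiplicative G, Circle) | Set.MapsTo f KM W0} with hV
  have hVopen : IsOpen V :=
    (ContinuousMap.isOpen_setOf_mapsTo hKMc hW0).preimage
      (ContinuousMonoidHom.isEmbedding_toContinuousMap _ _).continuous
  have hV1 : (1 : PontryaginDual (Multiplicative G)) ∈ V := by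
    intro x _
    show (0:ℝ) < (((1 : PontryaginDual (Multiplicative G)) x : Circle) : ℂ).re
    have h1 : ((1 : PontryaginDual (Multiplicative G)) x) = (1 : Circle) := rfl
    rw [h1]
    simp
  have htriv : ∀ γ ∈ Hstar, γ ∈ V → γ = 1 := by
    intro γ hγ hγV
    rw [hHstar] at hγ
    have hpos : ∀ x : G, 0 < ((γ (ofAdd x) : Circle) : ℂ).re := by
      intro x
      obtain ⟨y, hyK, hxy⟩ := hKcov x
      have h1 : γ (ofAdd x) = γ (ofAdd y) := by
        have h2 : ofAdd x = ofAdd y * ofAdd (x - y) := by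
          rw [← ofAdd_add]
          congr 1
          abel
        rw [h2, map_mul, hγ (x - y) hxy, mul_one]
      rw [h1]
      exact hγV (Set.mem_image_of_mem _ hyK)
    have hz : ∀ x : G, γ (ofAdd x) = 1 := by
      intro x
      refine circle_eq_one_of_pow_re_pos _ fun n => ?_
      have hp : (γ (ofAdd x)) ^ n = γ (ofAdd (n • x)) := by
        rw [← map_pow, ← ofAdd_nsmul]
      rw [hp]
      exact hpos (n • x)
    refine DFunLike.ext _ _ fun x => ?_
    calc γ x = γ (ofAdd (toAdd x)) := by rw [ofAdd_toAdd]
      _ = 1 := hz (toAdd x)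
  -- discreteness implies countability
  obtain ⟨W₁, hW₁o, hW₁1, hW₁⟩ := exists_open_nhds_one_mul_subset (hVopen.mem_nhds hV1)
  set W : Set (PontryaginDual (Multiplicative G)) := W₁ ∩ (fun γ => γ⁻¹) ⁻¹' W₁ with hWdef
  have hWo : IsOpen W := hW₁o.inter (hW₁o.preimage continuous_inv)
  have hW1 : (1 : PontryaginDual (Multiplicative G)) ∈ W := ⟨hW₁1, by simpa using hW₁1⟩
  have hdivsub : ∀ x ∈ W, ∀ y ∈ W, x * y⁻¹ ∈ V := by
    intro x hx y hy
    exact hW₁ (Set.mul_mem_mul hx.1 hy.2)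
  set fam : ↥Hstar → Set (PontryaginDual (Multiplicative G)) :=
    fun lam => (fun γ => γ * (↑lam)⁻¹) ⁻¹' W with hfam
  have hHdiv : ∀ a ∈ Hstar, ∀ b ∈ Hstar, a * b⁻¹ ∈ Hstar := by
    intro a ha b hb
    rw [hHstar] at *
    intro h hh
    show a (ofAdd h) * (b (ofAdd h))⁻¹ = 1
    rw [ha h hh, hb h hh]
    simp
  have hcnt : Countable ↥Hstar := by
    refine Pairwise.countable_of_isOpen_disjoint (s := fam) ?_ ?_ ?_
    · intro lam lam' hne
      refine Set.disjoint_left.mpr fun x hx hx' => hne ?_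
      have hdd : (x * (↑lam)⁻¹) * (x * (↑lam')⁻¹)⁻¹ ∈ V := hdivsub _ hx _ hx'
      have heq : (x * (↑lam)⁻¹) * (x * (↑lam')⁻¹)⁻¹ = (↑lam' : PontryaginDual (Multiplicative G)) * (↑lam)⁻¹ := by
        rw [mul_inv_rev, inv_inv, mul_comm x ((↑lam)⁻¹), mul_assoc, ← mul_assoc x,
          mul_comm x (↑lam' : PontryaginDual (Multiplicative G)), mul_assoc, mul_inv_cancel,
          mul_one, mul_comm]
      rw [heq] at hdd
      have hmem := hHdiv _ lam'.2 _ lam.2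
      have := htriv _ hmem hdd
      have h1 : (↑lam' : PontryaginDual (Multiplicative G)) = ↑lam := by
        rwa [mul_inv_eq_one] at this
      exact Subtype.ext h1.symm
    · intro lam
      exact hWo.preimage (continuous_mul_right _)
    · intro lam
      exact ⟨↑lam, by simpa [hfam] using hW1⟩
  exact Set.countable_coe_iff.mp hcnt

end FibAux2

end Aux

open MeasureTheory Multiplicative

set_option maxHeartbeats 1000000 in
/-- with `Γ` the dual of `G`, `Ω` a measurable section of `Γ/H*`, `N` a section
of `H*/M*` and `D = ⋃_{σ∈N} (Ω + σ)`: (a) `D` is a measurable section of `Γ/M*`; (b) the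
fiberization map `F ↦ (δ ↦ (F(δ + m*))_{m* ∈ M*})` defines a surjective linear isometry from
`L²(Γ)` onto `L²(D, ℓ²(M*))`. -/
theorem fiberization_isometry
    {G : Type*} [AddCommGroup G] [TopologicalSpace G] [IsTopologicalAddGroup G]
    [LocallyCompactSpace G] [T2Space G] [SecondCountableTopology G]
    [MeasurableSpace (PontryaginDual (Multiplicative G))]
    [BorelSpace (PontryaginDual (Multiplicative G))]
    (mΓ : Measure (PontryaginDual (Multiplicative G))) [mΓ.IsHaarMeasure]
    (H : AddSubgroup G) (hHcount : Countable H) (hHdiscrete : DiscreteTopology H)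
    (hHcompact : CompactSpace (G ⧸ H))
    (M : AddSubgroup G) (hHM : H ≤ M) (hMclosed : IsClosed (M : Set G))
    (Hstar Mstar : Set (PontryaginDual (Multiplicative G)))
    (hHstar : Hstar = {γ | ∀ h ∈ H, γ (ofAdd h) = 1})
    (hMstar : Mstar = {γ | ∀ m ∈ M, γ (ofAdd m) = 1})
    (Ω : Set (PontryaginDual (Multiplicative G)))
    (hΩmeas : MeasurableSet Ω) (hΩfin : mΓ Ω < ⊤)
    (hΩ : ∀ γ : PontryaginDual (Multiplicative G), ∃! ω, ω ∈ Ω ∧ γ / ω ∈ Hstar)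
    (N : Set (PontryaginDual (Multiplicative G))) (hNH : N ⊆ Hstar)
    (hN : ∀ lam ∈ Hstar, ∃! σ, σ ∈ N ∧ lam / σ ∈ Mstar)
    (D : Set (PontryaginDual (Multiplicative G)))
    (hD : D = {γ : PontryaginDual (Multiplicative G) | ∃ ω ∈ Ω, ∃ σ ∈ N, γ = ω * σ}) :
    MeasurableSet D ∧
      (∀ γ : PontryaginDual (Multiplicative G), ∃! δ, δ ∈ D ∧ γ / δ ∈ Mstar) ∧
      ∃ U : Lp ℂ 2 mΓ →ₗᵢ[ℂ] Lp (lp (fun _ : ↥Mstar => ℂ) 2) 2 (mΓ.restrict D),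
        Function.Surjective U ∧
        ∀ (F : Lp ℂ 2 mΓ) (f : PontryaginDual (Multiplicative G) → ℂ), Measurable f →
          (F : PontryaginDual (Multiplicative G) → ℂ) =ᵐ[mΓ] f →
          ∀ᵐ δ ∂(mΓ.restrict D), ∀ m : ↥Mstar,
            (U F : PontryaginDual (Multiplicative G) → lp (fun _ : ↥Mstar => ℂ) 2) δ m
              = f (δ * ↑m) := by
  have hHc : Hstar.Countable := FibAux2.countable_annihilator H hHcompact Hstar hHstar
  -- Mstar ⊆ Hstar
  have hMsubH : Mstar ⊆ Hstar := by
    rw [hHstar, hMstar]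
    intro γ hγ h hh
    exact hγ h (hHM hh)
  -- multiplicative closure of Hstar
  have hHmul : ∀ a ∈ Hstar, ∀ b ∈ Hstar, a * b ∈ Hstar := by
    rw [hHstar]
    intro a ha b hb h hh
    show a (ofAdd h) * b (ofAdd h) = 1
    rw [ha h hh, hb h hh, one_mul]
  -- (a) the section property of D
  have hsec : ∀ γ : PontryaginDual (Multiplicative G), ∃! δ, δ ∈ D ∧ γ / δ ∈ Mstar := by
    intro γ
    obtain ⟨ω, ⟨hωΩ, hωH⟩, hωuniq⟩ := hΩ γ
    obtain ⟨σ, ⟨hσN, hσM⟩, hσuniq⟩ := hN (γ / ω) hωH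
    refine ⟨ω * σ, ⟨?_, ?_⟩, ?_⟩
    · rw [hD]
      exact ⟨ω, hωΩ, σ, hσN, rfl⟩
    · rw [← div_div]
      exact hσM
    · rintro δ' ⟨hδ'D, hδ'M⟩
      rw [hD] at hδ'D
      obtain ⟨ω', hω'Ω, σ', hσ'N, rfl⟩ := hδ'D
      have hγδ'H : γ / (ω' * σ') ∈ Hstar := hMsubH hδ'M
      have hσ'H : σ' ∈ Hstar := hNH hσ'N
      have hmulH : (γ / (ω' * σ')) * σ' ∈ Hstar := hHmul _ hγδ'H _ hσ'H
      have heq : γ / (ω' * σ') * σ' = γ / ω' := by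
        simp [div_eq_mul_inv, mul_inv_rev, inv_inv, mul_comm, mul_left_comm, mul_assoc]
      rw [heq] at hmulH
      have hωeq : ω' = ω := hωuniq ω' ⟨hω'Ω, hmulH⟩
      subst hωeq
      have hσ'cond : σ' ∈ N ∧ (γ / ω') / σ' ∈ Mstar := by
        refine ⟨hσ'N, ?_⟩
        rw [div_div]
        exact hδ'M
      have hσeq : σ' = σ := hσuniq σ' hσ'cond
      rw [hσeq]
  -- countability
  have hNc : N.Countable := hHc.mono hNH
  have hMc : Mstar.Countable := hHc.mono hMsubH
  haveI : Countable ↥Mstar := hMc.to_subtype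
  -- measurability of D
  have hDeq : D = ⋃ σ ∈ N, (fun γ => γ * σ⁻¹) ⁻¹' Ω := by
    rw [hD]
    ext γ
    simp only [Set.mem_setOf_eq, Set.mem_iUnion, Set.mem_preimage]
    constructor
    · rintro ⟨ω, hω, σ, hσ, rfl⟩
      exact ⟨σ, hσ, by rwa [mul_inv_cancel_right]⟩
    · rintro ⟨σ, hσ, hγ⟩
      exact ⟨γ * σ⁻¹, hγ, σ, hσ, by rw [inv_mul_cancel_right]⟩
  have hDmeas : MeasurableSet D := by
    rw [hDeq]
    exact MeasurableSet.biUnion hNc fun σ _ => (measurable_mul_const σ⁻¹) hΩmeas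
  -- partition property for the core theorem
  have hcoreh1 : ∀ x : PontryaginDual (Multiplicative G),
      ∃! i : ↥Mstar, x * (↑i)⁻¹ ∈ D := by
    intro x
    obtain ⟨δ, ⟨hδD, hδM⟩, huniq⟩ := hsec x
    refine ⟨⟨x / δ, hδM⟩, ?_, ?_⟩
    · show x * (x / δ)⁻¹ ∈ D
      have hxx : x * (x / δ)⁻¹ = δ := by
        simp [div_eq_mul_inv, mul_inv_rev, inv_inv, mul_comm, mul_left_comm, mul_assoc]
      rwa [hxx]
    · rintro ⟨j, hjM⟩ hj
      have h2 : x / (x * j⁻¹) = j := by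
        simp [div_eq_mul_inv, mul_inv_rev, inv_inv, mul_comm, mul_left_comm, mul_assoc]
      have h3 := huniq (x * j⁻¹) ⟨hj, by rw [h2]; exact hjM⟩
      refine Subtype.ext ?_
      show j = x / δ
      rw [← h3, h2]
  obtain ⟨U, hUsurj, hUspec⟩ := FibAux.fiber_core (μ := mΓ)
    (c := fun i : ↥Mstar => (i : PontryaginDual (Multiplicative G))) hDmeas
    (fun a => measurable_mul_const a) (fun a => measurePreserving_mul_right mΓ a) hcoreh1
  exact ⟨hDmeas, hsec, U, hUsurj, hUspec⟩
end
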